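/- Under the hypotheses of the previous recursion (ε₁ = ε, ε_{n+1} = ε_n^{2−α} q, 0 < α < 1/(2(N+1)), N ≥ 1, and ε ≤ b·q^{−(N+1)/N} with q ≥ 2 and b sufficiently small), the sequence ε_n converges to 0; in fact ε_n ≤ (b^c ε^{1−c})^{(2−α)^{n-1}} · (ε/a)^c where c = N/((N+1)(1−α)) < 1, provided a·q^{−(N+1)/N} < ε. -/

import Mathlib

open Filter

/-- Superexponential decay of the KAM scales: with `ε₁ = ε`,
`ε_{n+1} = ε_n^{2−α}·q`, `0 < α < 1/(2(N+1))`, `q ≥ 2` and `b` sufficiently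
small, if `a·q^{−(N+1)/N} < ε ≤ b·q^{−(N+1)/N}` then `ε_n → 0` and in fact
`ε_n ≤ (b^c ε^{1−c})^{(2−α)^{n−1}} · (ε/a)^c` with
`c = N/((N+1)(1−α)) < 1`. -/
theorem kam_recursion_decay (N : ℕ) (hN : 1 ≤ N) (α : ℝ)
    (hα : 0 < α) (hα1 : α < 1 / (2 * ((N : ℝ) + 1))) :
    (N : ℝ) / (((N : ℝ) + 1) * (1 - α)) < 1 ∧
    ∃ b₀ > 0, ∀ a b ε q : ℝ, 0 < a → a < b → b ≤ b₀ → 2 ≤ q →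
      a * q ^ (-((N : ℝ) + 1) / N) < ε → ε ≤ b * q ^ (-((N : ℝ) + 1) / N) →
      ∀ e : ℕ → ℝ, e 1 = ε → (∀ n, 1 ≤ n → e (n + 1) = e n ^ (2 - α) * q) →
        Tendsto e atTop (nhds 0) ∧
        ∀ n, 1 ≤ n →
          e n ≤ (b ^ ((N : ℝ) / (((N : ℝ) + 1) * (1 - α))) *
                  ε ^ (1 - (N : ℝ) / (((N : ℝ) + 1) * (1 - α)))) ^ ((2 - α) ^ (n - 1)) *
                (ε / a) ^ ((N : ℝ) / (((N : ℝ) + 1) * (1 - α))) := by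
  have hN0 : (0:ℝ) < N := by exact_mod_cast hN
  have hN1 : (0:ℝ) < (N:ℝ) + 1 := by linarith
  rw [lt_div_iff₀ (by positivity)] at hα1
  have hα2 : α < 1/2 := by nlinarith
  have h1α : 0 < 1 - α := by linarith
  set c := (N:ℝ) / (((N:ℝ)+1) * (1-α)) with hc
  have hcpos : 0 < c := by positivity
  have hc1 : c < 1 := by
    rw [hc, div_lt_one (by positivity)]
    nlinarith
  refine ⟨hc1, 1/2, by norm_num, ?_⟩
  intro a b ε q ha hab hb hq hεa hεb e he1 hrec
  have hqpos : (0:ℝ) < q := by linarith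
  have hqe : (0:ℝ) < q ^ (-((N:ℝ)+1)/N) := Real.rpow_pos_of_pos hqpos _
  have hε : 0 < ε := lt_trans (by positivity) hεa
  have hbpos : 0 < b := lt_trans ha hab
  have hεb' : ε ≤ b := by
    have hle : q ^ (-((N:ℝ)+1)/N) ≤ 1 :=
      Real.rpow_le_one_of_one_le_of_nonpos (by linarith)
        (div_nonpos_of_nonpos_of_nonneg (by linarith) hN0.le)
    nlinarith
  have h2α : (1:ℝ) ≤ 2 - α := by linarith
  have hpos : ∀ n, 1 ≤ n → 0 < e n := by
    intro n hn
    induction n, hn using Nat.le_induction with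
    | base => rw [he1]; exact hε
    | succ n hn ih =>
      rw [hrec n hn]
      exact mul_pos (Real.rpow_pos_of_pos ih _) hqpos
  -- closed-form estimate
  have key : ∀ n, 1 ≤ n →
      e n ≤ ε ^ ((2-α)^(n-1)) * q ^ (((2-α)^(n-1) - 1)/(1-α)) := by
    intro n hn
    induction n, hn using Nat.le_induction with
    | base => simp [he1]
    | succ n hn ih =>
      rw [hrec n hn]
      have hn1 : n - 1 + 1 = n := Nat.sub_add_cancel hn
      calc e n ^ (2-α) * q
          ≤ (ε ^ ((2-α)^(n-1)) * q ^ (((2-α)^(n-1) - 1)/(1-α))) ^ (2-α) * q := by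
            gcongr
            exact (hpos n hn).le
        _ = ε ^ ((2-α)^(n-1) * (2-α)) *
              (q ^ (((2-α)^(n-1) - 1)/(1-α) * (2-α)) * q) := by
            rw [Real.mul_rpow (by positivity) (by positivity),
              ← Real.rpow_mul hε.le, ← Real.rpow_mul hqpos.le, mul_assoc]
        _ = ε ^ ((2-α)^(n+1-1)) * q ^ (((2-α)^(n+1-1) - 1)/(1-α)) := by
            rw [← Real.rpow_add_one hqpos.ne']
            have hAA : ((2-α):ℝ)^(n+1-1) = (2-α)^(n-1) * (2-α) := by
              rw [Nat.add_sub_cancel]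
              conv_lhs => rw [← hn1]
              rw [pow_succ]
            rw [hAA]
            congr 1
            field_simp
            ring
  -- substitution bounds
  have hq1N : q ^ (((N:ℝ)+1)/N) ≤ b / ε := by
    rw [le_div_iff₀ hε]
    calc q ^ (((N:ℝ)+1)/N) * ε ≤ q ^ (((N:ℝ)+1)/N) * (b * q ^ (-((N:ℝ)+1)/N)) := by
          gcongr
      _ = b * (q ^ (((N:ℝ)+1)/N) * q ^ (-((N:ℝ)+1)/N)) := by ring
      _ = b := by
          rw [← Real.rpow_add hqpos]
          have : ((N:ℝ)+1)/N + (-((N:ℝ)+1))/N = 0 := by ring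
          rw [this, Real.rpow_zero, mul_one]
  have hq2 : q ^ (-((N:ℝ)+1)/N) < ε / a := by
    rw [lt_div_iff₀ ha, mul_comm]
    exact hεa
  have key2 : ∀ m : ℝ, 0 ≤ m → q ^ (m/(1-α)) ≤ (b/ε) ^ (c*m) := by
    intro m hm
    have h1 : q ^ (m/(1-α)) = (q ^ (((N:ℝ)+1)/N)) ^ (c*m) := by
      rw [← Real.rpow_mul hqpos.le]
      congr 1
      rw [hc]
      field_simp
    rw [h1]
    exact Real.rpow_le_rpow (Real.rpow_nonneg hqpos.le _) hq1N (by positivity)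
  have key3 : q ^ (-1/(1-α)) ≤ (ε/a) ^ c := by
    have h1 : q ^ (-1/(1-α)) = (q ^ (-((N:ℝ)+1)/N)) ^ c := by
      rw [← Real.rpow_mul hqpos.le]
      congr 1
      rw [hc]
      field_simp
    rw [h1]
    exact Real.rpow_le_rpow (Real.rpow_nonneg hqpos.le _) hq2.le hcpos.le
  -- main bound
  have bound : ∀ n, 1 ≤ n →
      e n ≤ (b ^ c * ε ^ (1-c)) ^ ((2-α)^(n-1)) * (ε/a) ^ c := by
    intro n hn
    set m : ℝ := (2-α)^(n-1) with hm
    have hm1 : (1:ℝ) ≤ m := one_le_pow₀ h2α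
    calc e n ≤ ε ^ m * q ^ ((m-1)/(1-α)) := key n hn
      _ = ε ^ m * (q ^ (m/(1-α)) * q ^ (-1/(1-α))) := by
          rw [← Real.rpow_add hqpos]
          congr 1
          ring
      _ ≤ ε ^ m * ((b/ε) ^ (c*m) * (ε/a) ^ c) := by
          gcongr
          all_goals first
            | exact key2 m (by linarith)
            | exact key3
            | exact hεb'
            | linarith
            | positivity
      _ = (b ^ c * ε ^ (1-c)) ^ m * (ε/a) ^ c := by
          rw [← mul_assoc]
          congr 1
          rw [Real.div_rpow hbpos.le hε.le, div_eq_mul_inv,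
            ← Real.rpow_neg hε.le,
            Real.mul_rpow (by positivity) (by positivity),
            ← Real.rpow_mul hbpos.le, ← Real.rpow_mul hε.le,
            ← mul_assoc, mul_comm (ε ^ m), mul_assoc,
            ← Real.rpow_add hε]
          congr 1
          ring
  -- tendsto
  have hK : 0 < b ^ c * ε ^ (1-c) := by positivity
  have hKle : b ^ c * ε ^ (1-c) ≤ b := by
    calc b ^ c * ε ^ (1-c) ≤ b ^ c * b ^ (1-c) := by
          gcongr
          all_goals first
            | exact key2 m (by linarith)
            | exact key3
            | exact hεb'
            | linarith
            | positivity
      _ = b := by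
          rw [← Real.rpow_add hbpos]
          norm_num
  have hK1 : b ^ c * ε ^ (1-c) < 1 := by
    calc b ^ c * ε ^ (1-c) ≤ b := hKle
      _ ≤ 1/2 := hb
      _ < 1 := by norm_num
  have htend : Tendsto (fun n : ℕ =>
      (b ^ c * ε ^ (1-c)) ^ ((2-α)^(n-1)) * (ε/a) ^ c) atTop (nhds 0) := by
    have h0 : (0:ℝ) = 0 * (ε/a) ^ c := by ring
    rw [h0]
    apply Tendsto.mul_const
    have hinner : Tendsto (fun n : ℕ => ((2-α):ℝ)^(n-1)) atTop atTop :=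
      (tendsto_pow_atTop_atTop_of_one_lt (by linarith : (1:ℝ) < 2-α)).comp
        (tendsto_sub_atTop_nat 1)
    exact (tendsto_rpow_atTop_of_base_lt_one _ (by linarith) hK1).comp hinner
  refine ⟨?_, bound⟩
  apply squeeze_zero' (t₀ := atTop) ?_ ?_ htend
  · filter_upwards [eventually_ge_atTop 1] with n hn
    exact (hpos n hn).le
  · filter_upwards [eventually_ge_atTop 1] with n hn
    exact bound n hn
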